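/- For every normalized fully binary string s of length n: if the last symbol of s is 1, then the flip sorting distance satisfies d_s(s) = n − 2, and if the last symbol of s is 0, then d_s(s) = n − 1. -/

import Mathlib

/-- Prefix reversal (flip) of the first `i` symbols of `s`. -/
def pflip (i : ℕ) (s : List ℕ) : List ℕ := (s.take i).reverse ++ s.drop i

/-- One flip step: `t` is obtained from `s` by some flip `f^(i)` with `1 ≤ i ≤ |s|`. -/
def FlipStep (s t : List ℕ) : Prop := ∃ i, 1 ≤ i ∧ i ≤ s.length ∧ t = pflip i s

/-- `ReachIn m s t`: `t` can be obtained from `s` by exactly `m` flips. -/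
def ReachIn : ℕ → List ℕ → List ℕ → Prop
  | 0 => fun s t => s = t
  | (m+1) => fun s t => ∃ u, FlipStep s u ∧ ReachIn m u t

/-- Flip distance: minimum number of flips transforming `s` into `t`. -/
noncomputable def flipDist (s t : List ℕ) : ℕ := sInf {m | ReachIn m s t}

/-- Two strings are compatible if every symbol occurs equally often in both. -/
def Compatible (s t : List ℕ) : Prop := ∀ a, s.count a = t.count a

/-- A string is fully `k`-ary if the set of symbols occurring in it is exactly `{0,…,k-1}`. -/
def FullyKary (k : ℕ) (s : List ℕ) : Prop := ∀ a, a ∈ s ↔ a < k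

/-- A string is normalized if no two adjacent symbols are equal. -/
def Normalized (s : List ℕ) : Prop := s.Chain' (· ≠ ·)

/-- A string is grouped if the occurrences of each symbol are consecutive. -/
def Grouped (s : List ℕ) : Prop :=
  ∀ i j l : Fin s.length, i < j → j < l → s.get i = s.get l → s.get j = s.get i

/-- Flip grouping distance: minimum number of flips transforming `s` into some grouped string. -/
noncomputable def groupDist (s : List ℕ) : ℕ := sInf {m | ∃ t, Grouped t ∧ ReachIn m s t}

/-- Flip sorting distance: flip distance from `s` to its non-descending rearrangement `I(s)`. -/
noncomputable def sortDist (s : List ℕ) : ℕ := flipDist s (s.insertionSort (· ≤ ·))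

/-- `rep w m` is the concatenation of `m` copies of the string `w`. -/
def rep (w : List ℕ) (m : ℕ) : List ℕ := (List.replicate m w).flatten

/- ## auxiliary -/


def alt : ℕ → ℕ → ℕ → List ℕ
  | _, _, 0 => []
  | x, y, (m+1) => x :: alt y x m

lemma alt_zero (x y : ℕ) : alt x y 0 = [] := rfl
lemma alt_succ (x y m : ℕ) : alt x y (m+1) = x :: alt y x m := rfl

lemma alt_length : ∀ (m x y : ℕ), (alt x y m).length = m := by
  intro m
  induction m with
  | zero => intro x y; rfl
  | succ k ih => intro x y; simp [alt_succ, ih]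

lemma getLast?_alt : ∀ (m x y : ℕ), (alt x y (m+1)).getLast? = some (if m % 2 = 0 then x else y) := by
  intro m
  induction m with
  | zero => intro x y; rfl
  | succ k ih =>
    intro x y
    rw [show alt x y (k+1+1) = x :: y :: alt x y k from rfl,
        List.getLast?_cons_cons,
        show (y :: alt x y k) = alt y x (k+1) from rfl, ih]
    rcases Nat.mod_two_eq_zero_or_one k with h | h <;> simp [h, Nat.add_mod]

lemma eq_alt : ∀ (l : List ℕ) (x : ℕ), l.Chain' (· ≠ ·) → (∀ a ∈ l, a < 2) →
    l.head? = some x → l = alt x (1-x) l.length := by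
  intro l
  induction l with
  | nil => intro x _ _ h; simp at h
  | cons a t ih =>
    intro x hc hb hh
    simp at hh
    subst hh
    cases t with
    | nil => rfl
    | cons b t' =>
      have hab : a ≠ b := (List.isChain_cons_cons.mp hc).1
      have hc' : (b :: t').Chain' (· ≠ ·) := (List.isChain_cons_cons.mp hc).2
      have hb' : ∀ c ∈ (b :: t'), c < 2 := fun c hc => hb c (List.mem_cons_of_mem _ hc)
      have ha2 : a < 2 := hb a (by simp)
      have hb2 : b < 2 := hb b (by simp)
      have hba : b = 1 - a := by omega
      have hrec := ih b hc' hb' rfl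
      simp only [List.length_cons, alt_succ] at hrec
      have ht' : t' = alt (1-b) b t'.length := by
        exact (List.cons.injEq _ _ _ _ ▸ hrec).2
      rw [show (1:ℕ)-b = a by omega] at ht'
      simp only [List.length_cons, alt_succ]
      rw [← hba, ← ht']

/- ## adjacency count -/

def adj : List ℕ → ℕ
  | a :: b :: l => (if a = b then 1 else 0) + adj (b :: l)
  | _ => 0

def jn (l₁ l₂ : List ℕ) : ℕ :=
  match l₁.getLast?, l₂.head? with
  | some a, some b => if a = b then 1 else 0
  | _, _ => 0

lemma jn_eq {a b : ℕ} {l₁ l₂ : List ℕ} (h1 : l₁.getLast? = some a) (h2 : l₂.head? = some b) :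
    jn l₁ l₂ = if a = b then 1 else 0 := by
  unfold jn; rw [h1, h2]

lemma jn_nil_left (l₂ : List ℕ) : jn [] l₂ = 0 := rfl

lemma jn_le (l₁ l₂ : List ℕ) : jn l₁ l₂ ≤ 1 := by
  unfold jn
  rcases l₁.getLast? with _ | a <;> rcases l₂.head? with _ | b <;> simp
  split <;> simp

lemma adj_nil : adj [] = 0 := rfl
lemma adj_single (a : ℕ) : adj [a] = 0 := rfl
lemma adj_cons_cons (a b : ℕ) (l : List ℕ) :
    adj (a :: b :: l) = (if a = b then 1 else 0) + adj (b :: l) := rfl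

lemma adj_append : ∀ (l₁ l₂ : List ℕ), adj (l₁ ++ l₂) = adj l₁ + adj l₂ + jn l₁ l₂ := by
  intro l₁
  induction l₁ with
  | nil => intro l₂; rw [List.nil_append, jn_nil_left, adj_nil]; omega
  | cons a t ih =>
    intro l₂
    cases t with
    | nil =>
      cases l₂ with
      | nil => simp [adj_single, adj_nil, jn]
      | cons b l =>
        rw [show ([a] ++ (b :: l)) = a :: b :: l from rfl, adj_cons_cons, adj_single,
            jn_eq (l₁ := [a]) (l₂ := b :: l) (a := a) (b := b) rfl rfl]
        ring
    | cons c t' =>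
      rw [show ((a :: c :: t') ++ l₂) = a :: c :: (t' ++ l₂) from rfl,
          adj_cons_cons, show c :: (t' ++ l₂) = (c :: t') ++ l₂ from rfl, ih,
          adj_cons_cons]
      have hj : jn (a :: c :: t') l₂ = jn (c :: t') l₂ := by
        unfold jn; rw [List.getLast?_cons_cons]
      rw [hj]
      ring

lemma adj_reverse : ∀ (l : List ℕ), adj l.reverse = adj l := by
  intro l
  induction l with
  | nil => rfl
  | cons a t ih =>
    rw [List.reverse_cons, adj_append, ih, adj_single]
    cases t with
    | nil => simp [jn_nil_left, adj_nil, adj_single]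
    | cons b t' =>
      rw [adj_cons_cons]
      have hl : (b :: t').reverse.getLast? = some b := by
        rw [List.getLast?_reverse]; rfl
      rw [jn_eq hl (by rfl)]
      have : (if a = b then (1:ℕ) else 0) = (if b = a then 1 else 0) := by
        split <;> split <;> omega
      rw [this]
      ring

lemma adj_replicate : ∀ (k c : ℕ), adj (List.replicate k c) = k - 1 := by
  intro k c
  induction k with
  | zero => rfl
  | succ j ih =>
    cases j with
    | zero => rfl
    | succ i =>
      rw [List.replicate_succ, List.replicate_succ, adj_cons_cons, if_pos rfl,
          ← List.replicate_succ, ih]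
      omega

lemma chain'_adj : ∀ (l : List ℕ), l.Chain' (· ≠ ·) → adj l = 0 := by
  intro l
  induction l with
  | nil => intro _; rfl
  | cons a t ih =>
    intro hc
    cases t with
    | nil => rfl
    | cons b t' =>
      have h1 := (List.isChain_cons_cons.mp hc).1
      rw [adj_cons_cons, if_neg h1, ih (List.isChain_cons_cons.mp hc).2]

/- ## potential -/

def psi (l : List ℕ) : ℕ := adj l + (if l.getLast? = some 1 then 1 else 0)

lemma psi_flip {s t : List ℕ} (h : FlipStep s t) : psi t ≤ psi s + 1 := by
  obtain ⟨i, h1, h2, rfl⟩ := h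
  have hsplit : s = s.take i ++ s.drop i := (List.take_append_drop i s).symm
  by_cases hi : i = s.length
  · have hd : s.drop i = [] := by rw [hi]; simp
    have ht : s.take i = s := by rw [hi]; simp
    have hps : pflip i s = s.reverse := by rw [pflip, hd, ht]; simp
    rw [hps]
    unfold psi
    rw [adj_reverse]
    have hA : (if s.reverse.getLast? = some 1 then (1:ℕ) else 0) ≤ 1 := by split <;> omega
    omega
  · have hd : s.drop i ≠ [] := by
      simp only [ne_eq, List.drop_eq_nil_iff]
      omega
    obtain ⟨c, hc⟩ : ∃ c, (s.drop i).getLast? = some c := by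
      rcases h : (s.drop i).getLast? with _ | c
      · exact absurd (List.getLast?_eq_none_iff.mp h) hd
      · exact ⟨_, rfl⟩
    have hlast : (pflip i s).getLast? = s.getLast? := by
      have e1 : (pflip i s).getLast? = some c := by
        rw [pflip, List.getLast?_append, hc]; simp
      have e2 : s.getLast? = some c := by
        conv_lhs => rw [hsplit]
        rw [List.getLast?_append, hc]; simp
      rw [e1, e2]
    have hadj : adj (pflip i s) ≤ adj s + 1 := by
      have e1 : adj (pflip i s) = adj (s.take i) + adj (s.drop i) + jn (s.take i).reverse (s.drop i) := by
        rw [pflip, adj_append, adj_reverse]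
      have e2 : adj s = adj (s.take i) + adj (s.drop i) + jn (s.take i) (s.drop i) := by
        conv_lhs => rw [hsplit]
        rw [adj_append]
      have := jn_le (s.take i).reverse (s.drop i)
      omega
    unfold psi
    rw [hlast]
    omega

lemma reach_psi : ∀ (m : ℕ) (s t : List ℕ), ReachIn m s t → psi t ≤ psi s + m := by
  intro m
  induction m with
  | zero => intro s t h; rw [show s = t from h]; omega
  | succ k ih =>
    intro s t h
    obtain ⟨u, hstep, hrest⟩ := h
    have hu := ih u t hrest
    have hs := psi_flip hstep
    omega

lemma reach_perm : ∀ (m : ℕ) (s t : List ℕ), ReachIn m s t → s.Perm t := by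
  intro m
  induction m with
  | zero => intro s t h; rw [show s = t from h]
  | succ k ih =>
    intro s t h
    obtain ⟨u, ⟨i, _, _, rfl⟩, hrest⟩ := h
    refine List.Perm.trans ?_ (ih _ t hrest)
    have hp : (pflip i s).Perm (s.take i ++ s.drop i) :=
      List.Perm.append ((s.take i).reverse_perm) (List.Perm.refl _)
    rw [List.take_append_drop] at hp
    exact hp.symm

/- ## construction -/

def state : ℕ → ℕ → ℕ → ℕ → ℕ → ℕ → List ℕ
  | 0, p, q, x, y, r => List.replicate p x ++ List.replicate q y ++ alt y x r
  | (m+1), p, q, x, y, r => state m (q+1) p y x r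

lemma state_zero (p q x y r : ℕ) :
    state 0 p q x y r = List.replicate p x ++ List.replicate q y ++ alt y x r := rfl
lemma state_succ (m p q x y r : ℕ) : state (m+1) p q x y r = state m (q+1) p y x r := rfl

lemma reach_state : ∀ (m p q x y r : ℕ),
    ReachIn m (List.replicate p x ++ List.replicate q y ++ alt y x (m+r)) (state m p q x y r) := by
  intro m
  induction m with
  | zero =>
    intro p q x y r
    show List.replicate p x ++ List.replicate q y ++ alt y x (0+r) = state 0 p q x y r
    rw [Nat.zero_add, state_zero]
  | succ k ih =>
    intro p q x y r
    refine ⟨List.replicate (q+1) y ++ List.replicate p x ++ alt x y (k+r), ⟨p+q+1, by omega, ?_, ?_⟩, ?_⟩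
    · rw [List.length_append, List.length_append, List.length_replicate,
          List.length_replicate, alt_length]
      omega
    · have hsplit : List.replicate p x ++ List.replicate q y ++ alt y x (k+1+r)
          = (List.replicate p x ++ List.replicate (q+1) y) ++ alt x y (k+r) := by
        rw [show k+1+r = (k+r)+1 by omega, alt_succ, List.replicate_succ']
        simp
      rw [pflip, hsplit]
      have hlen : (List.replicate p x ++ List.replicate (q+1) y).length = p+q+1 := by
        simp only [List.length_append, List.length_replicate]; omega
      rw [List.take_left' hlen, List.drop_left' hlen, List.reverse_append,
          List.reverse_replicate, List.reverse_replicate, List.append_assoc]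
    · rw [state_succ]
      exact ih (q+1) p y x r

lemma state_even : ∀ (j p q x y r : ℕ),
    state (2*j) p q x y r = List.replicate (p+j) x ++ List.replicate (q+j) y ++ alt y x r := by
  intro j
  induction j with
  | zero =>
    intro p q x y r
    rw [Nat.mul_zero, state_zero, Nat.add_zero, Nat.add_zero]
  | succ i ih =>
    intro p q x y r
    rw [show 2*(i+1) = (2*i+1)+1 by omega, state_succ, state_succ, ih,
        show p+1+i = p+(i+1) by omega, show q+1+i = q+(i+1) by omega]

lemma state_odd (j p q x y r : ℕ) :
    state (2*j+1) p q x y r = List.replicate (q+1+j) y ++ List.replicate (p+j) x ++ alt x y r := by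
  rw [state_succ, state_even]

/- ## the sortDist computation lemma -/

lemma sorted_rep (a b : ℕ) :
    List.Pairwise (· ≤ ·) (List.replicate a 0 ++ List.replicate b 1) := by
  rw [List.pairwise_append]
  refine ⟨List.pairwise_replicate.mpr (Or.inr le_rfl),
         List.pairwise_replicate.mpr (Or.inr le_rfl), ?_⟩
  intro x hx y hy
  rw [List.eq_of_mem_replicate hx, List.eq_of_mem_replicate hy]
  omega

lemma getLast?_rep (k c : ℕ) : (List.replicate (k+1) c).getLast? = some c := by
  rw [← List.head?_reverse, List.reverse_replicate, List.replicate_succ]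
  rfl

lemma head?_rep (k c : ℕ) : (List.replicate (k+1) c).head? = some c := by
  rw [List.replicate_succ]; rfl

lemma sortDist_eq (s : List ℕ) (a b m : ℕ) (ha : 1 ≤ a) (hb : 1 ≤ b)
    (hr : ReachIn m s (List.replicate a 0 ++ List.replicate b 1))
    (hadj : adj s = 0)
    (hm : a + b - 1 = (if s.getLast? = some 1 then 1 else 0) + m) :
    sortDist s = m := by
  set T := List.replicate a 0 ++ List.replicate b 1 with hT
  have hins : s.insertionSort (· ≤ ·) = T := by
    refine List.Perm.eq_of_pairwise' (List.pairwise_insertionSort _ s) (sorted_rep a b) ?_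
    exact (List.perm_insertionSort _ s).trans (reach_perm m s T hr)
  obtain ⟨a', rfl⟩ : ∃ a', a = a' + 1 := ⟨a - 1, by omega⟩
  obtain ⟨b', rfl⟩ : ∃ b', b = b' + 1 := ⟨b - 1, by omega⟩
  have hlastT : T.getLast? = some 1 := by
    rw [hT, List.getLast?_append, getLast?_rep]; simp
  have hadjT : adj T = a' + b' := by
    rw [hT, adj_append, adj_replicate, adj_replicate,
        jn_eq (getLast?_rep a' 0) (head?_rep b' 1)]
    simp
  have hpsiT : psi T = a' + b' + 1 := by
    rw [psi, hadjT, if_pos hlastT]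
  unfold sortDist flipDist
  rw [hins]
  have hmem : m ∈ {m | ReachIn m s T} := hr
  have hlow : ∀ m' ∈ {m | ReachIn m s T}, m ≤ m' := by
    intro m' hm'
    have h1 := reach_psi m' s T hm'
    rw [hpsiT] at h1
    have h2 : psi s = if s.getLast? = some 1 then 1 else 0 := by rw [psi, hadj]; omega
    rw [h2] at h1
    by_cases hc : s.getLast? = some 1 <;> simp [hc] at h1 hm ⊢ <;> omega
  exact le_antisymm (Nat.sInf_le hmem) (le_csInf ⟨m, hmem⟩ hlow)


theorem sorting_binary (n : ℕ) (s : List ℕ)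
    (hlen : s.length = n) (hfull : FullyKary 2 s) (hnorm : Normalized s) :
    (s.getLast? = some 1 → sortDist s = n - 2) ∧
    (s.getLast? = some 0 → sortDist s = n - 1) := by
  have h0 : (0:ℕ) ∈ s := (hfull 0).mpr (by omega)
  have h1 : (1:ℕ) ∈ s := (hfull 1).mpr (by omega)
  have hb : ∀ c ∈ s, c < 2 := fun c hc => (hfull c).mp hc
  rcases s with _ | ⟨a, _ | ⟨b, t⟩⟩
  · simp at h0
  · simp at h0 h1; omega
  · have halt : (a :: b :: t) = alt a (1-a) (t.length + 1 + 1) := by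
      have := eq_alt (a :: b :: t) a hnorm hb rfl
      simpa using this
    have ha2 : a < 2 := hb a (by simp)
    have hlast_eq : (a :: b :: t).getLast? = some (if (t.length + 1) % 2 = 0 then a else 1-a) := by
      rw [halt]; exact getLast?_alt (t.length+1) a (1-a)
    have hn : t.length + 1 + 1 = n := by simpa using hlen
    have hadj : adj (a :: b :: t) = 0 := chain'_adj _ hnorm
    constructor <;> intro hlast
    · -- last symbol 1, sortDist = n - 2
      rw [hlast_eq] at hlast
      interval_cases a <;> rcases Nat.mod_two_eq_zero_or_one t.length with hp | hp <;>
        simp [Nat.add_mod, hp] at hlast <;> norm_num at halt hlast_eq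
      · -- a = 0, t.length even
        obtain ⟨j, hj⟩ : ∃ j, t.length = 2*j := ⟨t.length / 2, by omega⟩
        have hr := reach_state (2*j) 1 0 0 1 1
        rw [state_even] at hr
        have e1 : List.replicate 1 0 ++ List.replicate 0 1 ++ alt 1 0 (2*j+1)
            = alt 0 1 (t.length + 1 + 1) := by rw [hj]; rfl
        have e2 : List.replicate (1+j) 0 ++ List.replicate (0+j) 1 ++ alt 1 0 1
            = List.replicate (1+j) 0 ++ List.replicate (j+1) 1 := by
          rw [show alt 1 0 1 = [1] from rfl, List.append_assoc, ← List.replicate_succ',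
              Nat.zero_add]
        rw [e1, e2, ← halt] at hr
        have hmx : (1+j) + (j+1) - 1 = (if (0 :: b :: t).getLast? = some 1 then 1 else 0) + 2*j := by
          rw [if_pos (by rw [List.getLast?_cons_cons, hlast_eq]; simp [Nat.add_mod, hp])]
          omega
        have key := sortDist_eq (0 :: b :: t) (1+j) (j+1) (2*j) (by omega) (by omega) hr hadj hmx
        rw [key]; omega
      · -- a = 1, t.length odd
        obtain ⟨j, hj⟩ : ∃ j, t.length = 2*j+1 := ⟨t.length / 2, by omega⟩
        have hr := reach_state (2*j+1) 1 0 1 0 1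
        rw [state_odd] at hr
        have e1 : List.replicate 1 1 ++ List.replicate 0 0 ++ alt 0 1 (2*j+1+1)
            = alt 1 0 (t.length + 1 + 1) := by rw [hj]; rfl
        have e2 : List.replicate (0+1+j) 0 ++ List.replicate (1+j) 1 ++ alt 1 0 1
            = List.replicate (1+j) 0 ++ List.replicate (j+2) 1 := by
          rw [show alt 1 0 1 = [1] from rfl, List.append_assoc, ← List.replicate_succ',
              show 0+1+j = 1+j by omega, show 1+j+1 = j+2 by omega]
        rw [e1, e2, ← halt] at hr
        have hmx : (1+j) + (j+2) - 1 = (if (1 :: b :: t).getLast? = some 1 then 1 else 0) + (2*j+1) := by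
          rw [if_pos (by rw [List.getLast?_cons_cons, hlast_eq]; simp [Nat.add_mod, hp])]
          omega
        have key := sortDist_eq (1 :: b :: t) (1+j) (j+2) (2*j+1) (by omega) (by omega) hr hadj hmx
        rw [key]; omega
    · -- last symbol 0, sortDist = n - 1
      rw [hlast_eq] at hlast
      interval_cases a <;> rcases Nat.mod_two_eq_zero_or_one t.length with hp | hp <;>
        simp [Nat.add_mod, hp] at hlast <;> norm_num at halt hlast_eq
      · -- a = 0, t.length odd
        obtain ⟨j, hj⟩ : ∃ j, t.length = 2*j+1 := ⟨t.length / 2, by omega⟩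
        have hr := reach_state (2*j+2) 1 0 0 1 0
        rw [show (2*j+2 : ℕ) = 2*(j+1) by omega, state_even] at hr
        have e1 : List.replicate 1 0 ++ List.replicate 0 1 ++ alt 1 0 (2*(j+1))
            = alt 0 1 (t.length + 1 + 1) := by
          rw [hj]; rfl
        have e2 : List.replicate (1+(j+1)) 0 ++ List.replicate (0+(j+1)) 1 ++ alt 1 0 0
            = List.replicate (j+2) 0 ++ List.replicate (j+1) 1 := by
          rw [alt_zero, List.append_nil, show 1+(j+1) = j+2 by omega, Nat.zero_add]
        rw [e1, e2, ← halt] at hr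
        have hmx : (j+2) + (j+1) - 1 = (if (0 :: b :: t).getLast? = some 1 then 1 else 0) + 2*(j+1) := by
          rw [if_neg (by rw [List.getLast?_cons_cons, hlast_eq]; simp [Nat.add_mod, hp])]
          omega
        have key := sortDist_eq (0 :: b :: t) (j+2) (j+1) (2*(j+1)) (by omega) (by omega) hr hadj hmx
        rw [key]; omega
      · -- a = 1, t.length even
        obtain ⟨j, hj⟩ : ∃ j, t.length = 2*j := ⟨t.length / 2, by omega⟩
        have hr := reach_state (2*j+1) 1 0 1 0 0
        rw [state_odd] at hr
        have e1 : List.replicate 1 1 ++ List.replicate 0 0 ++ alt 0 1 (2*j+1+0)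
            = alt 1 0 (t.length + 1 + 1) := by
          rw [hj, show 2*j+1+0 = 2*j+1 by omega]; rfl
        have e2 : List.replicate (0+1+j) 0 ++ List.replicate (1+j) 1 ++ alt 1 0 0
            = List.replicate (1+j) 0 ++ List.replicate (1+j) 1 := by
          rw [alt_zero, List.append_nil, show 0+1+j = 1+j by omega]
        rw [e1, e2, ← halt] at hr
        have hmx : (1+j) + (1+j) - 1 = (if (1 :: b :: t).getLast? = some 1 then 1 else 0) + (2*j+1) := by
          rw [if_neg (by rw [List.getLast?_cons_cons, hlast_eq]; simp [Nat.add_mod, hp])]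
          omega
        have key := sortDist_eq (1 :: b :: t) (1+j) (1+j) (2*j+1) (by omega) (by omega) hr hadj hmx
        rw [key]; omega
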